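/- The projection of the affine cone over the twisted cubic onto its last three coordinates is exactly the surface V(x·z² − y³) ⊆ ℂ³: for all x, y, z ∈ ℂ, there exists u ∈ ℂ with u² = x·y, u·y = x·z, and u·z = y² if and only if x·z² = y³. -/

import Mathlib

/-- The projection of the affine cone over the twisted cubic onto its last three
coordinates is exactly V(x·z² − y³). -/
theorem twisted_cubic_cone_projection :
    ∀ x y z : ℂ,
      (∃ u : ℂ, u ^ 2 = x * y ∧ u * y = x * z ∧ u * z = y ^ 2) ↔
      x * z ^ 2 = y ^ 3 := by
  intro x y z
  constructor
  · rintro ⟨u, h1, h2, h3⟩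
    calc x * z ^ 2 = (u * y) * z := by rw [h2]; ring
    _ = (u * z) * y := by ring
    _ = y ^ 2 * y := by rw [h3]
    _ = y ^ 3 := by ring
  · intro h
    by_cases hz : z = 0
    · subst hz
      have hy : y = 0 := by
        have : y ^ 3 = 0 := by rw [← h]; ring
        exact pow_eq_zero_iff (by norm_num) |>.mp this
      exact ⟨0, by simp [hy]⟩
    · refine ⟨y ^ 2 / z, ?_, ?_, ?_⟩
      · field_simp
        calc y ^ 4 = y * y ^ 3 := by ring
        _ = y * (x * z ^ 2) := by rw [h]
        _ = y * z ^ 2 * x := by ring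
      · field_simp
        rw [← h]; ring
      · field_simp
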